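/- Let X be a topological space, f : D² → X continuous, and {D̂_j}_{j∈J} a finite family of pairwise disjoint closed round subdiscs of the open unit disc D², with boundaries σ_j = ∂D̂_j. Suppose for each j the loop f∘σ_j is null-homotopic in an open subset U ⊂ X, via maps g_j : D² → U with g_j|_{∂D²} = f∘σ_j (suitably reparametrized), and suppose f(D² \ ⋃_j int D̂_j) ⊂ U. Then f|_{∂D²} is null-homotopic in U. -/

import Mathlib

set_option maxHeartbeats 1000000


/-- The cut-and-paste construction of Lemma 2.4: let `f : D² → X` be continuous,
`{D̂_j}` a finite family of pairwise disjoint closed round subdiscs of the open unit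
disc, with centers `x_j` and radii `r_j`.  If each boundary loop `f∘σ_j` bounds a disc
`g_j` inside an open set `U ⊆ X`, and `f` maps `D² \ ⋃ int D̂_j` into `U`, then the
boundary loop `f|∂D²` is null-homotopic in `U`, i.e. it extends to a map of the disc
with image in `U` (the glued map `g`). -/
theorem stmt11 {X : Type} [TopologicalSpace X] (U : Set X) (hU : IsOpen U)
    (f : C(EuclideanSpace ℝ (Fin 2), X))
    {J : Type} [Finite J]
    (x : J → EuclideanSpace ℝ (Fin 2)) (r : J → ℝ) (hr : ∀ j, 0 < r j)
    (hsub : ∀ j, Metric.closedBall (x j) (r j) ⊆ Metric.ball (0 : EuclideanSpace ℝ (Fin 2)) 1)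
    (hdisj : Pairwise fun i j =>
      Disjoint (Metric.closedBall (x i) (r i)) (Metric.closedBall (x j) (r j)))
    (g : J → C(EuclideanSpace ℝ (Fin 2), X))
    (hbdry : ∀ j, ∀ v ∈ Metric.sphere (0 : EuclideanSpace ℝ (Fin 2)) 1,
      g j v = f (x j + r j • v))
    (hgU : ∀ j, g j '' Metric.closedBall (0 : EuclideanSpace ℝ (Fin 2)) 1 ⊆ U)
    (hfU : f '' (Metric.closedBall (0 : EuclideanSpace ℝ (Fin 2)) 1 \
      ⋃ j, Metric.ball (x j) (r j)) ⊆ U) :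
    ∃ G : C(EuclideanSpace ℝ (Fin 2), X),
      (∀ v ∈ Metric.sphere (0 : EuclideanSpace ℝ (Fin 2)) 1, G v = f v) ∧
      G '' Metric.closedBall (0 : EuclideanSpace ℝ (Fin 2)) 1 ⊆ U := by
  classical
  -- the glued function
  set h : EuclideanSpace ℝ (Fin 2) → X := fun y =>
    if hy : ∃ j, y ∈ Metric.closedBall (x j) (r j) then
      g hy.choose ((r hy.choose)⁻¹ • (y - x hy.choose)) else f y with hh
  -- uniqueness of the ball containing a point
  have huniq : ∀ (j : J) (y : EuclideanSpace ℝ (Fin 2)) (hy : ∃ j, y ∈ Metric.closedBall (x j) (r j)),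
      y ∈ Metric.closedBall (x j) (r j) → hy.choose = j := by
    intro j y hy hyj
    by_contra hne
    exact Set.disjoint_left.1 (hdisj hne) hy.choose_spec hyj
  -- value on each closed ball
  have hval : ∀ (j : J) (y : EuclideanSpace ℝ (Fin 2)), y ∈ Metric.closedBall (x j) (r j) →
      h y = g j ((r j)⁻¹ • (y - x j)) := by
    intro j y hyj
    have hy : ∃ j, y ∈ Metric.closedBall (x j) (r j) := ⟨j, hyj⟩
    simp only [hh, dif_pos hy, huniq j y hy hyj]
  -- value off the open balls
  have hval' : ∀ y : EuclideanSpace ℝ (Fin 2), y ∉ (⋃ j, Metric.ball (x j) (r j)) → h y = f y := by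
    intro y hy
    by_cases hy' : ∃ j, y ∈ Metric.closedBall (x j) (r j)
    · obtain ⟨j, hyj⟩ := hy'
      rw [hval j y hyj]
      have hdist : dist y (x j) = r j := by
        rcases lt_or_eq_of_le (Metric.mem_closedBall.1 hyj) with hlt | he
        · exact absurd (Set.mem_iUnion.2 ⟨j, Metric.mem_ball.2 hlt⟩) hy
        · exact he
      have hsph : (r j)⁻¹ • (y - x j) ∈ Metric.sphere (0 : EuclideanSpace ℝ (Fin 2)) 1 := by
        simp only [mem_sphere_iff_norm, sub_zero, norm_smul, norm_inv,
          Real.norm_eq_abs, abs_of_pos (hr j)]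
        rw [show ‖y - x j‖ = dist y (x j) from (dist_eq_norm _ _).symm, hdist]
        field_simp
        exact div_self (hr j).ne'
      rw [hbdry j _ hsph, smul_inv_smul₀ (hr j).ne', add_sub_cancel]
    · simp only [hh, dif_neg hy']
  -- continuity via a finite closed cover
  have hcont : Continuous h := by
    haveI : Finite (Option J) := Finite.of_equiv (J ⊕ PUnit.{1}) (Equiv.optionEquivSumPUnit J).symm
    have hlf : LocallyFinite (fun o : Option J =>
        Option.elim o ((⋃ j, Metric.ball (x j) (r j))ᶜ)
          (fun j => Metric.closedBall (x j) (r j))) :=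
      locallyFinite_of_finite _
    refine hlf.continuous ?_ ?_ ?_
    · apply Set.eq_univ_of_forall
      intro y
      by_cases hy : y ∈ ⋃ j, Metric.ball (x j) (r j)
      · obtain ⟨j, hyj⟩ := Set.mem_iUnion.1 hy
        exact Set.mem_iUnion.2 ⟨some j, Metric.ball_subset_closedBall hyj⟩
      · exact Set.mem_iUnion.2 ⟨none, hy⟩
    · rintro (_ | j)
      · exact (isOpen_iUnion fun j => Metric.isOpen_ball).isClosed_compl
      · exact Metric.isClosed_closedBall
    · rintro (_ | j)
      · exact (f.continuous.continuousOn).congr hval'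
      · exact ((g j).continuous.comp
          (((continuous_id.sub continuous_const).const_smul (r j)⁻¹))).continuousOn.congr
          (fun y hy => hval j y hy)
  refine ⟨⟨h, hcont⟩, ?_, ?_⟩
  · intro v hv
    apply hval'
    intro hvmem
    obtain ⟨j, hvj⟩ := Set.mem_iUnion.1 hvmem
    have := hsub j (Metric.ball_subset_closedBall hvj)
    rw [Metric.mem_ball, mem_sphere_iff_norm, sub_zero] at *
    simp [dist_eq_norm, sub_zero, hv] at this
  · rintro z ⟨y, hy, rfl⟩
    show h y ∈ U
    by_cases hy' : ∃ j, y ∈ Metric.closedBall (x j) (r j)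
    · obtain ⟨j, hyj⟩ := hy'
      rw [hval j y hyj]
      refine hgU j ⟨_, ?_, rfl⟩
      simp only [Metric.mem_closedBall, dist_zero_right, norm_smul, norm_inv,
        Real.norm_eq_abs, abs_of_pos (hr j)]
      rw [inv_mul_le_iff₀ (hr j), mul_one]
      exact (dist_eq_norm y (x j)) ▸ Metric.mem_closedBall.1 hyj
    · have hnot : y ∉ ⋃ j, Metric.ball (x j) (r j) := by
        intro hmem
        obtain ⟨j, hj⟩ := Set.mem_iUnion.1 hmem
        exact hy' ⟨j, Metric.ball_subset_closedBall hj⟩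
      rw [hval' y hnot]
      exact hfU ⟨y, ⟨hy, hnot⟩, rfl⟩
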